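/- For every ε > 0 there is a constant C_ε such that for all X ≥ 2, the sum over squarefree positive integers n of ∏_{p | n} (log X)/(p log p) is at most C_ε · X^ε. -/

import Mathlib

open scoped BigOperators

open Finset

noncomputable def pw (n : ℕ) : ℝ := if n.Prime then 1 / (n * Real.log n) else 0

lemma pw_fiber_le (N k : ℕ) :
    ∑ n ∈ (range N).filter (fun n => Nat.log 2 n = k), pw n
      ≤ if k = 0 then 0 else 4 / (Real.log 2 * k ^ 2) := by
  have hlog2 : (0:ℝ) < Real.log 2 := Real.log_pos one_lt_two
  rcases eq_or_ne k 0 with rfl | hk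
  · simp only [if_pos rfl]
    apply le_of_eq
    apply Finset.sum_eq_zero
    intro n hn
    rw [mem_filter] at hn
    unfold pw
    rw [if_neg]
    intro hp
    have : 0 < Nat.log 2 n := Nat.log_pos one_lt_two hp.two_le
    omega
  · rw [if_neg hk]
    have hk1 : 1 ≤ k := Nat.one_le_iff_ne_zero.mpr hk
    have hkR : (1:ℝ) ≤ (k:ℝ) := by exact_mod_cast hk1
    have hcpos : (0:ℝ) < 2 ^ k * (k * Real.log 2) ^ 2 := by positivity
    have hterm : ∀ n ∈ (range N).filter (fun n => Nat.log 2 n = k),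
        pw n ≤ (if n.Prime then Real.log n else 0) / (2 ^ k * (k * Real.log 2) ^ 2) := by
      intro n hn
      rw [mem_filter] at hn
      unfold pw
      by_cases hp : n.Prime
      · rw [if_pos hp, if_pos hp]
        have h2k : (2:ℝ) ^ k ≤ (n:ℝ) := by
          have := Nat.pow_log_le_self 2 hp.pos.ne'
          rw [hn.2] at this
          exact_mod_cast this
        have hln : (k:ℝ) * Real.log 2 ≤ Real.log n := by
          calc (k:ℝ) * Real.log 2 = Real.log ((2:ℝ) ^ k) := by rw [Real.log_pow]
            _ ≤ Real.log n := Real.log_le_log (by positivity) h2k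
        have hlnpos : (0:ℝ) < Real.log n := lt_of_lt_of_le (by positivity) hln
        have hnpos : (0:ℝ) < (n:ℝ) := by exact_mod_cast hp.pos
        rw [div_le_div_iff₀ (by positivity) hcpos]
        have h2kpos : (0:ℝ) < 2 ^ k := by positivity
        nlinarith [mul_le_mul h2k hln (by positivity) hnpos.le,
          mul_le_mul hln hln (by positivity) hlnpos.le]
      · rw [if_neg hp, if_neg hp, zero_div]
    calc ∑ n ∈ (range N).filter (fun n => Nat.log 2 n = k), pw n
        ≤ ∑ n ∈ (range N).filter (fun n => Nat.log 2 n = k),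
            (if n.Prime then Real.log n else 0) / (2 ^ k * (k * Real.log 2) ^ 2) :=
          Finset.sum_le_sum hterm
      _ = (∑ n ∈ (range N).filter (fun n => Nat.log 2 n = k),
            if n.Prime then Real.log n else 0) / (2 ^ k * (k * Real.log 2) ^ 2) := by
          rw [Finset.sum_div]
      _ ≤ (2 ^ (k+1) * (2 * Real.log 2)) / (2 ^ k * (k * Real.log 2) ^ 2) := by
          rw [div_le_div_iff_of_pos_right hcpos, ← Finset.sum_filter]
          have hsub : ((range N).filter (fun n => Nat.log 2 n = k)).filter Nat.Prime
              ⊆ (range (2 ^ (k+1) + 1)).filter Nat.Prime := by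
            intro n hn
            simp only [mem_filter, mem_range] at hn ⊢
            refine ⟨?_, hn.2⟩
            have := Nat.lt_pow_succ_log_self (b := 2) one_lt_two n
            rw [hn.1.2] at this
            omega
          have h1 : ∑ n ∈ ((range N).filter (fun n => Nat.log 2 n = k)).filter Nat.Prime,
              Real.log n ≤ ∑ p ∈ (range (2 ^ (k+1) + 1)).filter Nat.Prime, Real.log p := by
            apply Finset.sum_le_sum_of_subset_of_nonneg hsub
            intro p hp _
            rw [mem_filter] at hp
            exact Real.log_nonneg (by exact_mod_cast hp.2.one_lt.le)
          refine h1.trans ?_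
          have h2 : ∑ p ∈ (range (2 ^ (k+1) + 1)).filter Nat.Prime, Real.log p
              = Real.log (primorial (2 ^ (k+1)) : ℕ) := by
            unfold primorial
            push_cast
            rw [Real.log_prod]
            intro p hp
            rw [mem_filter] at hp
            exact_mod_cast hp.2.pos.ne'
          rw [h2]
          have h3 : Real.log (primorial (2 ^ (k+1)) : ℕ) ≤ Real.log ((4:ℝ) ^ (2 ^ (k+1))) := by
            apply Real.log_le_log (by exact_mod_cast primorial_pos _)
            exact_mod_cast primorial_le_4_pow (2 ^ (k+1))
          refine h3.trans ?_
          rw [Real.log_pow, show (4:ℝ) = 2^2 by norm_num, Real.log_pow]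
          push_cast
          ring_nf
          exact le_rfl
      _ = 4 / (Real.log 2 * k ^ 2) := by
          have hkne : (k:ℝ) ≠ 0 := by positivity
          rw [pow_succ]
          field_simp
          ring

lemma pw_nonneg (n : ℕ) : 0 ≤ pw n := by
  unfold pw
  split
  · rename_i hp
    have h1 : (1:ℝ) < n := by exact_mod_cast hp.one_lt
    have := Real.log_pos h1
    positivity
  · exact le_refl 0

lemma sq_aux : ∀ K : ℕ, ∑ k ∈ range (K+2), (if k = 0 then (0:ℝ) else 1/(k:ℝ)^2) ≤ 2 - 1/(K+1) := by
  intro K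
  induction K with
  | zero =>
    rw [Finset.sum_range_succ, Finset.sum_range_one]
    norm_num
  | succ K ih =>
    rw [show K+1+2 = (K+2)+1 by ring, Finset.sum_range_succ]
    have hK1 : (0:ℝ) < (K:ℝ)+1 := by positivity
    have hK2 : (0:ℝ) < (K:ℝ)+2 := by positivity
    have key : (if K+2 = 0 then (0:ℝ) else 1/((K+2:ℕ):ℝ)^2) ≤ 1/((K:ℝ)+1) - 1/((K:ℝ)+2) := by
      rw [if_neg (by omega)]
      push_cast
      rw [div_sub_div _ _ (ne_of_gt hK1) (ne_of_gt hK2)]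
      rw [div_le_div_iff₀ (by positivity) (by positivity)]
      ring_nf
      nlinarith
    push_cast at ih key ⊢
    rw [show ((K:ℝ)+1+1) = (K:ℝ)+2 by ring]
    linarith

lemma sq_sum_le (K : ℕ) : ∑ k ∈ range K, (if k = 0 then (0:ℝ) else 1/(k:ℝ)^2) ≤ 2 := by
  match K with
  | 0 => simp
  | 1 => simp
  | (K+2) =>
    have h := sq_aux K
    have : (0:ℝ) < 1/((K:ℝ)+1) := by positivity
    linarith

lemma pw_sum_le (N : ℕ) : ∑ n ∈ range N, pw n ≤ 8 / Real.log 2 := by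
  have hlog2 : (0:ℝ) < Real.log 2 := Real.log_pos one_lt_two
  have hmap : ∀ n ∈ range N, Nat.log 2 n ∈ range N := fun n hn =>
    mem_range.mpr (lt_of_le_of_lt (Nat.log_le_self 2 n) (mem_range.mp hn))
  rw [← Finset.sum_fiberwise_of_maps_to hmap pw]
  calc ∑ k ∈ range N, ∑ n ∈ (range N).filter (fun n => Nat.log 2 n = k), pw n
      ≤ ∑ k ∈ range N, (if k = 0 then 0 else 4/(Real.log 2 * (k:ℝ)^2)) :=
        Finset.sum_le_sum fun k _ => pw_fiber_le N k
    _ = ∑ k ∈ range N, (4/Real.log 2) * (if k = 0 then (0:ℝ) else 1/(k:ℝ)^2) := by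
        apply Finset.sum_congr rfl
        intro k _
        rcases eq_or_ne k 0 with rfl | h
        · simp
        · rw [if_neg h, if_neg h]
          have : (k:ℝ) ≠ 0 := by exact_mod_cast h
          field_simp
    _ = (4/Real.log 2) * ∑ k ∈ range N, (if k = 0 then (0:ℝ) else 1/(k:ℝ)^2) := by
        rw [Finset.mul_sum]
    _ ≤ (4/Real.log 2) * 2 :=
        mul_le_mul_of_nonneg_left (sq_sum_le N) (by positivity)
    _ = 8 / Real.log 2 := by ring

lemma pw_summable : Summable pw := summable_of_sum_range_le pw_nonneg pw_sum_le

lemma pw_tail (η : ℝ) (hη : 0 < η) :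
    ∃ P : ℕ, ∀ Q : Finset ℕ, (∀ p ∈ Q, P < p) → ∑ p ∈ Q, pw p ≤ η := by
  obtain ⟨s, hs⟩ := summable_iff_vanishing_norm.mp pw_summable η hη
  refine ⟨s.sup id, fun Q hQ => ?_⟩
  have hdisj : Disjoint Q s := by
    rw [Finset.disjoint_left]
    intro p hp hps
    exact absurd (Finset.le_sup (f := id) hps) (not_le.mpr (hQ p hp))
  have h := hs Q hdisj
  rw [Real.norm_eq_abs] at h
  exact le_of_lt (lt_of_le_of_lt (le_abs_self _) h)

lemma sumF_le_prod (g : ℕ → ℝ) (hg : ∀ p, 0 ≤ g p) (N : ℕ) :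
    ∑ n ∈ range N, (if Squarefree n then ∏ p ∈ n.primeFactors, g p else 0)
      ≤ ∏ p ∈ (range N).filter Nat.Prime, (g p + 1) := by
  classical
  rw [← Finset.sum_filter]
  have hinj : ∀ x ∈ (range N).filter Squarefree, ∀ y ∈ (range N).filter Squarefree,
      Nat.primeFactors x = Nat.primeFactors y → x = y := by
    intro x hx y hy hxy
    rw [mem_filter] at hx hy
    rw [← Nat.prod_primeFactors_of_squarefree hx.2, ← Nat.prod_primeFactors_of_squarefree hy.2,
      hxy]
  have himg : ((range N).filter Squarefree).image Nat.primeFactors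
      ⊆ ((range N).filter Nat.Prime).powerset := by
    intro t ht
    rw [Finset.mem_image] at ht
    obtain ⟨n, hn, rfl⟩ := ht
    rw [mem_filter, mem_range] at hn
    rw [Finset.mem_powerset]
    intro p hp
    rw [Nat.mem_primeFactors] at hp
    rw [mem_filter, mem_range]
    exact ⟨lt_of_le_of_lt (Nat.le_of_dvd (Nat.pos_of_ne_zero hp.2.2) hp.2.1) hn.1, hp.1⟩
  calc ∑ n ∈ (range N).filter Squarefree, ∏ p ∈ n.primeFactors, g p
      = ∑ t ∈ ((range N).filter Squarefree).image Nat.primeFactors, ∏ p ∈ t, g p := by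
        rw [Finset.sum_image hinj]
    _ ≤ ∑ t ∈ ((range N).filter Nat.Prime).powerset, ∏ p ∈ t, g p :=
        Finset.sum_le_sum_of_subset_of_nonneg himg
          (fun t _ _ => Finset.prod_nonneg fun p _ => hg p)
    _ = ∏ p ∈ (range N).filter Nat.Prime, (g p + 1) := by
        rw [Finset.prod_add]
        simp

/-- For every `ε > 0` there is a constant `C_ε` such that for all `X ≥ 2`,
the sum over squarefree positive integers `n` of `∏_{p | n} (log X)/(p log p)` converges
and is at most `C_ε · X^ε`. -/
theorem stmt5 (ε : ℝ) (hε : 0 < ε) :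
    ∃ C : ℝ, ∀ X : ℝ, 2 ≤ X →
      Summable (fun n : ℕ => if Squarefree n then
          ∏ p ∈ n.primeFactors, Real.log X / (p * Real.log p) else 0) ∧
      (∑' n : ℕ, if Squarefree n then
          ∏ p ∈ n.primeFactors, Real.log X / (p * Real.log p) else 0)
        ≤ C * X ^ ε := by
  classical
  have hlog2 : (0:ℝ) < Real.log 2 := Real.log_pos one_lt_two
  obtain ⟨P, hP⟩ := pw_tail (ε/2) (by positivity)
  set a : ℝ := 1/(2*Real.log 2) with ha_def
  set δ : ℝ := ε/(2*(P+1)) with hδ_def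
  have hδ : 0 < δ := by positivity
  have ha : 0 < a := by positivity
  set D : ℝ := 1 + a/δ with hD_def
  have hD : 1 ≤ D := le_add_of_nonneg_right (by positivity)
  refine ⟨D^(P+1), fun X hX => ?_⟩
  have hXpos : (0:ℝ) < X := lt_of_lt_of_le two_pos hX
  set L : ℝ := Real.log X with hL_def
  have hL2 : Real.log 2 ≤ L := Real.log_le_log two_pos hX
  have hL : 0 < L := lt_of_lt_of_le hlog2 hL2
  set g : ℕ → ℝ := fun p => Real.log X / (p * Real.log p) with hg_def
  have hg : ∀ p, 0 ≤ g p := by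
    intro p
    apply div_nonneg hL.le
    rcases Nat.eq_zero_or_pos p with rfl | hp
    · simp
    · exact mul_nonneg (Nat.cast_nonneg p)
        (Real.log_nonneg (by exact_mod_cast hp))
  have hFnonneg : ∀ n : ℕ, 0 ≤ (if Squarefree n then ∏ p ∈ n.primeFactors, g p else 0) := by
    intro n
    split
    · exact Finset.prod_nonneg fun p _ => hg p
    · exact le_refl 0
  have key : ∀ N : ℕ, ∑ n ∈ range N,
      (if Squarefree n then ∏ p ∈ n.primeFactors, g p else 0) ≤ D^(P+1) * X ^ ε := by
    intro N
    refine le_trans (sumF_le_prod g hg N) ?_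
    set s := (range N).filter Nat.Prime with hs_def
    rw [← Finset.prod_filter_mul_prod_filter_not s (fun p => p ≤ P)]
    have hprime : ∀ p ∈ s, p.Prime := fun p hp => (mem_filter.mp hp).2
    -- small primes
    have hsmall : ∏ p ∈ s.filter (fun p => p ≤ P), (g p + 1)
        ≤ D^(P+1) * Real.exp ((ε/2) * L) := by
      have hfac : ∀ p ∈ s.filter (fun p => p ≤ P), g p + 1 ≤ D * Real.exp (δ * L) := by
        intro p hp
        have hpp : p.Prime := hprime p (Finset.filter_subset _ _ hp)
        have hp2 : (2:ℝ) ≤ (p:ℝ) := by exact_mod_cast hpp.two_le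
        have hlogp : Real.log 2 ≤ Real.log p := Real.log_le_log two_pos hp2
        have h1 : g p ≤ a * L := by
          rw [hg_def, ha_def]
          have hden : (2:ℝ) * Real.log 2 ≤ (p:ℝ) * Real.log p :=
            mul_le_mul hp2 hlogp hlog2.le (by positivity)
          rw [div_mul_eq_mul_div, one_mul]
          exact div_le_div_of_nonneg_left hL.le (by positivity) hden |>.trans_eq rfl
        have h2 : a * L + 1 ≤ D * (δ * L + 1) := by
          rw [hD_def]
          have h : a * L = (a/δ) * (δ * L) := by field_simp
          nlinarith [h, mul_nonneg hδ.le hL.le, div_nonneg ha.le hδ.le]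
        have h3 : δ * L + 1 ≤ Real.exp (δ * L) := Real.add_one_le_exp _
        calc g p + 1 ≤ a * L + 1 := by linarith
          _ ≤ D * (δ * L + 1) := h2
          _ ≤ D * Real.exp (δ * L) := by
              apply mul_le_mul_of_nonneg_left h3 (by linarith)
      have hcard : (s.filter (fun p => p ≤ P)).card ≤ P + 1 := by
        have : s.filter (fun p => p ≤ P) ⊆ range (P+1) := by
          intro p hp
          rw [mem_filter] at hp
          exact mem_range.mpr (Nat.lt_succ_of_le hp.2)
        calc (s.filter (fun p => p ≤ P)).card ≤ (range (P+1)).card :=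
            Finset.card_le_card this
          _ = P + 1 := Finset.card_range _
      have hbase : (1:ℝ) ≤ D * Real.exp (δ * L) := by
        calc (1:ℝ) = 1 * 1 := by ring
          _ ≤ D * Real.exp (δ * L) :=
            mul_le_mul hD (Real.one_le_exp (by positivity)) zero_le_one (by linarith)
      calc ∏ p ∈ s.filter (fun p => p ≤ P), (g p + 1)
          ≤ ∏ _p ∈ s.filter (fun p => p ≤ P), (D * Real.exp (δ * L)) :=
            Finset.prod_le_prod (fun p _ => by have := hg p; linarith) hfac
        _ = (D * Real.exp (δ * L)) ^ (s.filter (fun p => p ≤ P)).card :=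
            Finset.prod_const _
        _ ≤ (D * Real.exp (δ * L)) ^ (P+1) := pow_le_pow_right₀ hbase hcard
        _ = D^(P+1) * Real.exp (δ * L) ^ (P+1) := mul_pow _ _ _
        _ = D^(P+1) * Real.exp ((ε/2) * L) := by
            rw [← Real.exp_nat_mul]
            congr 1
            rw [hδ_def]
            have : ((P:ℝ) + 1) ≠ 0 := by positivity
            push_cast
            field_simp
    -- large primes
    have htail : ∏ p ∈ s.filter (fun p => ¬ p ≤ P), (g p + 1) ≤ Real.exp ((ε/2) * L) := by
      calc ∏ p ∈ s.filter (fun p => ¬ p ≤ P), (g p + 1)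
          ≤ ∏ p ∈ s.filter (fun p => ¬ p ≤ P), Real.exp (g p) :=
            Finset.prod_le_prod (fun p _ => by have := hg p; linarith)
              (fun p _ => Real.add_one_le_exp (g p))
        _ = Real.exp (∑ p ∈ s.filter (fun p => ¬ p ≤ P), g p) := (Real.exp_sum _ _).symm
        _ ≤ Real.exp ((ε/2) * L) := by
            apply Real.exp_le_exp.mpr
            have hgw : ∀ p ∈ s.filter (fun p => ¬ p ≤ P), g p = L * pw p := by
              intro p hp
              have hpp : p.Prime := hprime p (Finset.filter_subset _ _ hp)
              rw [hg_def, pw]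
              rw [if_pos hpp]
              field_simp
              rfl
            rw [Finset.sum_congr rfl hgw, ← Finset.mul_sum]
            have hQ : ∀ p ∈ s.filter (fun p => ¬ p ≤ P), P < p := by
              intro p hp
              rw [mem_filter] at hp
              omega
            calc L * ∑ p ∈ s.filter (fun p => ¬ p ≤ P), pw p ≤ L * (ε/2) :=
                mul_le_mul_of_nonneg_left (hP _ hQ) hL.le
              _ = (ε/2) * L := by ring
    calc (∏ p ∈ s.filter (fun p => p ≤ P), (g p + 1)) *
          ∏ p ∈ s.filter (fun p => ¬ p ≤ P), (g p + 1)
        ≤ (D^(P+1) * Real.exp ((ε/2) * L)) * Real.exp ((ε/2) * L) := by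
          apply mul_le_mul hsmall htail
            (Finset.prod_nonneg fun p _ => by have := hg p; linarith)
            (by positivity)
      _ = D^(P+1) * X ^ ε := by
          rw [Real.rpow_def_of_pos hXpos, mul_assoc, ← Real.exp_add, ← hL_def]
          congr 2
          ring
  exact ⟨summable_of_sum_range_le hFnonneg key, Real.tsum_le_of_sum_range_le hFnonneg key⟩
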